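/- Suppose every w ∈ W satisfies w_h ≥ 0 and E_{d^D_h}[w_h] = 1 for all h. Then the approximation error ε_F = min_{f∈F} max_{w∈W} max_h (|E_{d^D_h}[w_h·(f_h − T_h f_{h+1})]| + |f_0(x_0,π_f(x_0)) − Q*_0(x_0,π*(x_0))|) satisfies ε_F ≤ 3 · min_{f∈F} max_h ‖f_h − Q*_h‖_∞. -/
import Mathlib


open Finset

private lemma sup'_abs_diff {α : Type*} (s : Finset α) (hs : s.Nonempty)
    (f g : α → ℝ) (ε : ℝ) (h : ∀ a ∈ s, |f a - g a| ≤ ε) :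
    |s.sup' hs f - s.sup' hs g| ≤ ε := by
  rw [abs_sub_le_iff]
  constructor <;> rw [sub_le_iff_le_add] <;> apply Finset.sup'_le <;> intro a ha <;>
    have := abs_sub_le_iff.mp (h a ha)
  · calc f a ≤ ε + g a := by linarith [this.1]
    _ ≤ ε + s.sup' hs g := by linarith [Finset.le_sup' g ha]
  · calc g a ≤ ε + f a := by linarith [this.2]
    _ ≤ ε + s.sup' hs f := by linarith [Finset.le_sup' f ha]

/-- The discriminator-based approximation error
`ε_F = min_{f∈F} max_{w∈W} max_h (|E_{d^D_h}[w_h·(f_h − T_h f_{h+1})]| +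
|f_0(x_0,π_f(x_0)) − Q*_0(x_0,π*(x_0))|)` is at most three times the best
`ℓ∞` approximation error `min_{f∈F} max_h ‖f_h − Q*_h‖_∞`, provided every
`w ∈ W` is nonnegative with `E_{d^D_h}[w_h] = 1`. -/
theorem stmt12 {X A : Type*} [Fintype X] [Fintype A] [Nonempty X] [Nonempty A]
    (H : ℕ) (hH : 0 < H) (x0 : X)
    (P : ℕ → X → A → X → ℝ) (hPnn : ∀ h x a x', 0 ≤ P h x a x')
    (hP1 : ∀ h x a, ∑ x', P h x a x' = 1)
    (R : ℕ → X → A → ℝ)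
    (dD : ℕ → X → A → ℝ) (hdDnn : ∀ h x a, 0 ≤ dD h x a)
    (Qstar : ℕ → X → A → ℝ) (hQH : ∀ x a, Qstar H x a = 0)
    (hQbell : ∀ h, h < H → ∀ x a, Qstar h x a = R h x a + ∑ x', P h x a x' *
        (univ.sup' univ_nonempty fun a' => Qstar (h + 1) x' a'))
    (F W : Finset (ℕ → X → A → ℝ)) (hF : F.Nonempty) (hW : W.Nonempty)
    (hFH : ∀ f ∈ F, ∀ x a, f H x a = 0)
    (hWnn : ∀ w ∈ W, ∀ h x a, 0 ≤ w h x a)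
    (hWnorm : ∀ w ∈ W, ∀ h, ∑ x, ∑ a, dD h x a * w h x a = 1)
    (gr : (ℕ → X → A → ℝ) → ℕ → X → A)
    (hgr : ∀ (f : ℕ → X → A → ℝ) (h : ℕ) (x : X) (a : A), f h x a ≤ f h x (gr f h x)) :
    F.inf' hF (fun f => W.sup' hW fun w =>
        (range H).sup' (nonempty_range_iff.mpr hH.ne') fun h =>
          |∑ x, ∑ a, dD h x a * (w h x a *
            (f h x a - (R h x a + ∑ x', P h x a x' *
              (univ.sup' univ_nonempty fun a' => f (h + 1) x' a'))))| +
          |f 0 x0 (gr f 0 x0) - Qstar 0 x0 (gr Qstar 0 x0)|)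
      ≤ 3 * F.inf' hF (fun f =>
          (range H).sup' (nonempty_range_iff.mpr hH.ne') fun h =>
            univ.sup' univ_nonempty fun p : X × A =>
              |f h p.1 p.2 - Qstar h p.1 p.2|) := by
  obtain ⟨f, hfF, hfeq⟩ := Finset.exists_mem_eq_inf' hF (fun f =>
    (range H).sup' (nonempty_range_iff.mpr hH.ne') fun h =>
      univ.sup' univ_nonempty fun p : X × A => |f h p.1 p.2 - Qstar h p.1 p.2|)
  rw [hfeq]
  set ε := (range H).sup' (nonempty_range_iff.mpr hH.ne') fun h =>
      univ.sup' univ_nonempty fun p : X × A => |f h p.1 p.2 - Qstar h p.1 p.2| with hεdef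
  -- bound |f h x a - Qstar h x a| ≤ ε for all h ≤ H
  have hblt : ∀ h < H, ∀ x a, |f h x a - Qstar h x a| ≤ ε := by
    intro h hlt x a
    calc |f h x a - Qstar h x a|
        ≤ univ.sup' univ_nonempty fun p : X × A => |f h p.1 p.2 - Qstar h p.1 p.2| :=
        Finset.le_sup' (fun p : X × A => |f h p.1 p.2 - Qstar h p.1 p.2|)
          (Finset.mem_univ (x, a))
      _ ≤ ε := Finset.le_sup'
          (fun h' => univ.sup' univ_nonempty fun p : X × A =>
            |f h' p.1 p.2 - Qstar h' p.1 p.2|) (mem_range.mpr hlt)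
  have hεnn : 0 ≤ ε :=
    le_trans (abs_nonneg _) (hblt 0 hH x0 (Classical.arbitrary A))
  have hb : ∀ h ≤ H, ∀ x a, |f h x a - Qstar h x a| ≤ ε := by
    intro h hh x a
    rcases eq_or_lt_of_le hh with heq | hlt
    · rw [heq, hFH f hfF, hQH]
      simpa using hεnn
    · exact hblt h hlt x a
  refine le_trans (Finset.inf'_le _ hfF) ?_
  apply Finset.sup'_le
  intro w hw
  apply Finset.sup'_le
  intro h hh
  have hhH : h < H := mem_range.mp hh
  -- Bellman residual bound: |f h x a - T f| ≤ 2ε pointwise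
  have hres : ∀ x a, |f h x a - (R h x a + ∑ x', P h x a x' *
      (univ.sup' univ_nonempty fun a' => f (h + 1) x' a'))| ≤ 2 * ε := by
    intro x a
    have hsup : ∀ x', |(univ.sup' univ_nonempty fun a' => f (h + 1) x' a') -
        (univ.sup' univ_nonempty fun a' => Qstar (h + 1) x' a')| ≤ ε := by
      intro x'
      exact sup'_abs_diff _ _ _ _ _ (fun a' _ => hb (h+1) hhH x' a')
    have key : |(∑ x', P h x a x' *
        (univ.sup' univ_nonempty fun a' => f (h + 1) x' a')) -
        (∑ x', P h x a x' *
        (univ.sup' univ_nonempty fun a' => Qstar (h + 1) x' a'))| ≤ ε := by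
      rw [← Finset.sum_sub_distrib]
      calc |∑ x', (P h x a x' * (univ.sup' univ_nonempty fun a' => f (h + 1) x' a') -
            P h x a x' * (univ.sup' univ_nonempty fun a' => Qstar (h + 1) x' a'))|
          ≤ ∑ x', |P h x a x' * (univ.sup' univ_nonempty fun a' => f (h + 1) x' a') -
            P h x a x' * (univ.sup' univ_nonempty fun a' => Qstar (h + 1) x' a')| :=
          Finset.abs_sum_le_sum_abs _ _
        _ ≤ ∑ x', P h x a x' * ε := by
          apply Finset.sum_le_sum
          intro x' _
          rw [← mul_sub, abs_mul, abs_of_nonneg (hPnn h x a x')]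
          exact mul_le_mul_of_nonneg_left (hsup x') (hPnn h x a x')
        _ = ε := by rw [← Finset.sum_mul, hP1, one_mul]
    have hQ := hQbell h hhH x a
    have h1 := hb h hhH.le x a
    calc |f h x a - (R h x a + ∑ x', P h x a x' *
          (univ.sup' univ_nonempty fun a' => f (h + 1) x' a'))|
        = |(f h x a - Qstar h x a) + ((∑ x', P h x a x' *
          (univ.sup' univ_nonempty fun a' => Qstar (h + 1) x' a')) -
          (∑ x', P h x a x' *
          (univ.sup' univ_nonempty fun a' => f (h + 1) x' a')))| := by
          rw [hQ]; ring_nf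
      _ ≤ |f h x a - Qstar h x a| + |(∑ x', P h x a x' *
          (univ.sup' univ_nonempty fun a' => Qstar (h + 1) x' a')) -
          (∑ x', P h x a x' *
          (univ.sup' univ_nonempty fun a' => f (h + 1) x' a'))| := abs_add_le _ _
      _ ≤ ε + ε := by
          refine add_le_add h1 ?_
          rw [abs_sub_comm]; exact key
      _ = 2 * ε := by ring
  -- first term ≤ 2ε
  have hA : |∑ x, ∑ a, dD h x a * (w h x a *
      (f h x a - (R h x a + ∑ x', P h x a x' *
        (univ.sup' univ_nonempty fun a' => f (h + 1) x' a'))))| ≤ 2 * ε := by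
    calc |∑ x, ∑ a, dD h x a * (w h x a *
        (f h x a - (R h x a + ∑ x', P h x a x' *
          (univ.sup' univ_nonempty fun a' => f (h + 1) x' a'))))|
        ≤ ∑ x, |∑ a, dD h x a * (w h x a *
          (f h x a - (R h x a + ∑ x', P h x a x' *
            (univ.sup' univ_nonempty fun a' => f (h + 1) x' a'))))| :=
        Finset.abs_sum_le_sum_abs _ _
      _ ≤ ∑ x, ∑ a, |dD h x a * (w h x a *
          (f h x a - (R h x a + ∑ x', P h x a x' *
            (univ.sup' univ_nonempty fun a' => f (h + 1) x' a'))))| := by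
        apply Finset.sum_le_sum; intro x _; exact Finset.abs_sum_le_sum_abs _ _
      _ ≤ ∑ x, ∑ a, dD h x a * (w h x a * (2 * ε)) := by
        apply Finset.sum_le_sum; intro x _
        apply Finset.sum_le_sum; intro a _
        rw [abs_mul, abs_mul, abs_of_nonneg (hdDnn h x a), abs_of_nonneg (hWnn w hw h x a)]
        exact mul_le_mul_of_nonneg_left
          (mul_le_mul_of_nonneg_left (hres x a) (hWnn w hw h x a)) (hdDnn h x a)
      _ = 2 * ε := by
        have : ∑ x, ∑ a, dD h x a * (w h x a * (2 * ε))
            = (∑ x, ∑ a, dD h x a * w h x a) * (2 * ε) := by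
          rw [Finset.sum_mul]
          congr 1; ext x
          rw [Finset.sum_mul]
          congr 1; ext a
          ring
        rw [this, hWnorm w hw h, one_mul]
  -- second term ≤ ε
  have hB : |f 0 x0 (gr f 0 x0) - Qstar 0 x0 (gr Qstar 0 x0)| ≤ ε := by
    rw [abs_le]
    have h1 := abs_le.mp (hb 0 hH.le x0 (gr f 0 x0))
    have h2 := abs_le.mp (hb 0 hH.le x0 (gr Qstar 0 x0))
    have g1 := hgr f 0 x0 (gr Qstar 0 x0)
    have g2 := hgr Qstar 0 x0 (gr f 0 x0)
    constructor <;> linarith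
  linarith
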